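/- For every n ≥ 4, there is no state-independent basis construction for real n-qubit states: there do not exist 2^n strings V_j = U₁^{(j)} ⊗ ⋯ ⊗ Uₙ^{(j)} of 2×2 complex unitary matrices such that for every real unit vector ψ ∈ (ℂ²)^{⊗n}, the 2^n vectors V_j ψ form an orthonormal basis of ℂ^{2^n}. -/

import Mathlib

open Matrix

/-- A family of vectors in `ℂ^κ` forms an orthonormal basis: the vectors are
pairwise orthogonal unit vectors and they span the whole space. -/
def IsONBasis {ι κ : Type*} [Fintype ι] [DecidableEq ι] [Fintype κ] (v : ι → κ → ℂ) : Prop :=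
  (∀ j j', star (v j) ⬝ᵥ v j' = if j = j' then 1 else 0) ∧
    Submodule.span ℂ (Set.range v) = ⊤

/-- The `n`-fold Kronecker product `U 0 ⊗ ⋯ ⊗ U (n-1)` of `2×2` matrices, acting on
`(ℂ²)^{⊗n} ≅ ℂ^{2^n}` indexed by `Fin n → Fin 2`. -/
def kronPow {n : ℕ} (U : Fin n → Matrix (Fin 2) (Fin 2) ℂ) :
    Matrix (Fin n → Fin 2) (Fin n → Fin 2) ℂ :=
  Matrix.of fun x y => ∏ k, U k (x k) (y k)

/- ### Auxiliary lemmas -/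

lemma StmtAux.countP_xor_split {α : Type*} (p q : α → Bool) (l : List α) :
    l.countP p + l.countP q
      = l.countP (fun x => xor (p x) (q x)) + 2 * l.countP (fun x => p x && q x) := by
  induction l with
  | nil => simp
  | cons a l ih =>
    simp only [List.countP_cons]
    cases hp : p a <;> cases hq : q a <;> simp [hp, hq] <;> omega

namespace StmtAux

section Key
variable {X : Type*} [Fintype X] [DecidableEq X] {d : ℕ}

lemma parity_choice (f g : Fin d → Bool) (hfg : f ≠ g) :
    ∃ k : Fin (d + 1),
      Odd ((List.finRange d).countP (fun i => f i && !decide (i.castSucc = k))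
        + (List.finRange d).countP (fun i => g i && !decide (i.castSucc = k))) := by
  classical
  set s : Fin d → Bool := fun i => xor (f i) (g i) with hs
  have hex : ∃ i, s i = true := by
    by_contra h
    push_neg at h
    apply hfg
    funext i
    have := h i
    cases hfi : f i <;> cases hgi : g i <;> simp [hs, hfi, hgi] at this ⊢
  obtain ⟨k₀, hk₀⟩ := hex
  set w := (List.finRange d).countP s with hw
  by_cases hwpar : Odd w
  · refine ⟨Fin.last d, ?_⟩
    have h1 := countP_xor_split (fun i => f i && !decide (i.castSucc = Fin.last d))
      (fun i => g i && !decide (i.castSucc = Fin.last d)) (List.finRange d)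
    have h2 : (List.finRange d).countP
        (fun x => xor (f x && !decide (x.castSucc = Fin.last d))
          (g x && !decide (x.castSucc = Fin.last d))) = w := by
      apply List.countP_congr
      intro i _
      have : decide (i.castSucc = Fin.last d) = false := by
        simp [Fin.ne_of_lt (Fin.castSucc_lt_last i)]
      rw [this]
      cases hfi : f i <;> cases hgi : g i <;> simp [hs, hfi, hgi]
    rw [h2] at h1
    obtain ⟨t, ht⟩ := hwpar
    rw [Nat.odd_iff]
    omega
  · have hwpar' : Even w := Nat.not_odd_iff_even.mp hwpar
    refine ⟨k₀.castSucc, ?_⟩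
    have h1 := countP_xor_split (fun i => f i && !decide (i.castSucc = k₀.castSucc))
      (fun i => g i && !decide (i.castSucc = k₀.castSucc)) (List.finRange d)
    have h2 : (List.finRange d).countP
        (fun x => xor (f x && !decide (x.castSucc = k₀.castSucc))
          (g x && !decide (x.castSucc = k₀.castSucc)))
        = (List.finRange d).countP (fun i => s i && !decide (i = k₀)) := by
      apply List.countP_congr
      intro i _
      have : decide (i.castSucc = k₀.castSucc) = decide (i = k₀) := by
        simp [Fin.castSucc_inj]
      rw [this]
      cases hfi : f i <;> cases hgi : g i <;> cases hik : decide (i = k₀) <;>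
        simp [hs, hfi, hgi, hik]
    rw [h2] at h1
    have h3 := countP_xor_split (fun i => s i && !decide (i = k₀))
      (fun i => s i && decide (i = k₀)) (List.finRange d)
    have h4 : (List.finRange d).countP
        (fun x => xor (s x && !decide (x = k₀)) (s x && decide (x = k₀))) = w := by
      apply List.countP_congr
      intro i _
      cases hsi : s i <;> cases hik : decide (i = k₀) <;> simp [hsi, hik]
    have h5 : (List.finRange d).countP (fun x => (s x && !decide (x = k₀))
        && (s x && decide (x = k₀))) = 0 := by
      rw [List.countP_eq_zero]
      intro i _
      cases hsi : s i <;> cases hik : decide (i = k₀) <;> simp [hsi, hik]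
    have h6 : (List.finRange d).countP (fun x => s x && decide (x = k₀)) = 1 := by
      have hc : (List.finRange d).countP (fun x => s x && decide (x = k₀))
          = (List.finRange d).countP (fun x => decide (x = k₀)) := by
        apply List.countP_congr
        intro i _
        by_cases hik : i = k₀
        · subst hik; simp [hk₀]
        · simp [hik]
      rw [hc]
      have := List.count_eq_one_of_mem (List.nodup_finRange d) (List.mem_finRange k₀)
      simp only [List.count] at this
      convert this using 2
      funext x
      by_cases hx : x = k₀ <;> simp [hx]
    obtain ⟨t, ht⟩ := hwpar'
    rw [Nat.odd_iff]
    omega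

lemma comm_aux (B : Fin (d + 1) → Matrix X X ℂ)
    (ha : ∀ i j, i ≠ j → B i * B j = -(B j * B i))
    (k : Fin (d + 1)) (f : Fin d → Bool) (l : List (Fin d)) :
    B k * (l.map (fun i => if f i then B i.castSucc else 1)).prod
      = ((-1 : ℂ) ^ (l.countP (fun i => f i && !decide (i.castSucc = k)))) •
          ((l.map (fun i => if f i then B i.castSucc else 1)).prod * B k) := by
  induction l with
  | nil => simp
  | cons a l ih =>
    simp only [List.map_cons, List.prod_cons, List.countP_cons]
    have step : ∀ (σ : ℂ) (P : Matrix X X ℂ), B k * P = σ • (P * B k) →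
        B k * ((if f a then B a.castSucc else 1) * P)
          = (σ * (if (f a && !decide (a.castSucc = k)) then -1 else 1)) •
            (((if f a then B a.castSucc else 1) * P) * B k) := by
      intro σ P hP
      have hone : (if (false = true) then (-1:ℂ) else 1) = 1 := by norm_num
      have hmone : (if (true = true) then (-1:ℂ) else 1) = -1 := by norm_num
      by_cases hfa : f a = true
      · have hcond : (if f a = true then B a.castSucc else 1) = B a.castSucc := if_pos hfa
        by_cases hk : a.castSucc = k
        · have hb : (f a && !decide (a.castSucc = k)) = false := by simp [hfa, hk]
          rw [hcond, hb, hone, mul_one]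
          subst hk
          calc B a.castSucc * (B a.castSucc * P)
              = B a.castSucc * (σ • (P * B a.castSucc)) := by rw [hP]
            _ = σ • (B a.castSucc * P * B a.castSucc) := by
                rw [Matrix.mul_smul, mul_assoc]
        · have hb : (f a && !decide (a.castSucc = k)) = true := by simp [hfa, hk]
          have hcomm : B k * B a.castSucc = -(B a.castSucc * B k) :=
            ha k a.castSucc (fun h => hk h.symm)
          rw [hcond, hb, hmone]
          calc B k * (B a.castSucc * P)
              = -(B a.castSucc * (B k * P)) := by
                rw [← mul_assoc, hcomm, neg_mul, mul_assoc]
            _ = -(B a.castSucc * (σ • (P * B k))) := by rw [hP]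
            _ = (σ * -1) • (B a.castSucc * P * B k) := by
                rw [Matrix.mul_smul, mul_assoc, mul_neg_one, neg_smul]
      · simp only [Bool.not_eq_true] at hfa
        simp [hfa, hP, mul_assoc]
    have := step _ _ ih
    rw [this]
    congr 1
    cases h : (f a && !decide (a.castSucc = k)) <;> simp [h, pow_succ, mul_comm]

/-- A family of `d + 1` pairwise anticommuting invertible matrices forces
`2 ^ d ≤ N²` where `N` is the size of the matrices. -/
lemma anticomm_bound [Nonempty X] (B : Fin (d + 1) → Matrix X X ℂ)
    (hu : ∀ i, IsUnit (B i)) (ha : ∀ i j, i ≠ j → B i * B j = -(B j * B i)) :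
    2 ^ d ≤ Fintype.card X * Fintype.card X := by
  classical
  set Q : (Fin d → Bool) → Matrix X X ℂ :=
    fun f => ((List.finRange d).map (fun i => if f i then B i.castSucc else 1)).prod with hQ
  have hQu : ∀ f, IsUnit (Q f) := by
    intro f
    apply List.prod_isUnit
    intro m hm
    simp only [List.mem_map] at hm
    obtain ⟨i, -, hi⟩ := hm
    by_cases hfi : f i = true <;> simp [hfi] at hi <;> rw [← hi]
    · exact hu _
    · exact isUnit_one
  choose Qi hQi1 hQi2 using fun f => isUnit_iff_exists.mp (hQu f)
  choose Bi hBi1 hBi2 using fun i => isUnit_iff_exists.mp (hu i)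
  have htrace : ∀ f g, trace (Q f * Qi g)
      = if f = g then (Fintype.card X : ℂ) else 0 := by
    intro f g
    by_cases hfg : f = g
    · subst hfg
      rw [if_pos rfl, hQi1, trace_one]
    · rw [if_neg hfg]
      obtain ⟨k, hodd⟩ := parity_choice f g hfg
      set tf := (List.finRange d).countP (fun i => f i && !decide (i.castSucc = k)) with htf
      set tg := (List.finRange d).countP (fun i => g i && !decide (i.castSucc = k)) with htg
      have hf : B k * Q f = ((-1 : ℂ) ^ tf) • (Q f * B k) := comm_aux B ha k f _
      have hg : B k * Q g = ((-1 : ℂ) ^ tg) • (Q g * B k) := comm_aux B ha k g _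
      have hginv : B k * Qi g = ((-1 : ℂ) ^ tg) • (Qi g * B k) := by
        have h2 : (Qi g * (B k * Q g)) * Qi g
            = (Qi g * (((-1 : ℂ) ^ tg) • (Q g * B k))) * Qi g := by rw [hg]
        have hL : (Qi g * (B k * Q g)) * Qi g = Qi g * B k := by
          rw [mul_assoc, mul_assoc, hQi1, mul_one]
        have hR : (Qi g * (((-1 : ℂ) ^ tg) • (Q g * B k))) * Qi g
            = ((-1 : ℂ) ^ tg) • (B k * Qi g) := by
          rw [Matrix.mul_smul, Matrix.smul_mul, ← mul_assoc, hQi2, one_mul]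
        rw [hL, hR] at h2
        have hsq : ((-1 : ℂ) ^ tg) * ((-1 : ℂ) ^ tg) = 1 := by
          rw [← pow_add]
          exact Even.neg_one_pow ⟨tg, rfl⟩
        calc B k * Qi g = (((-1 : ℂ) ^ tg) * ((-1 : ℂ) ^ tg)) • (B k * Qi g) := by
              rw [hsq, one_smul]
          _ = ((-1 : ℂ) ^ tg) • (((-1 : ℂ) ^ tg) • (B k * Qi g)) := by rw [smul_smul]
          _ = ((-1 : ℂ) ^ tg) • (Qi g * B k) := by rw [← h2]
      have hBX : B k * (Q f * Qi g) = -((Q f * Qi g) * B k) := by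
        calc B k * (Q f * Qi g) = (((-1 : ℂ) ^ tf) • (Q f * B k)) * Qi g := by
              rw [← mul_assoc, hf]
          _ = ((-1 : ℂ) ^ tf) • (Q f * (B k * Qi g)) := by
              rw [Matrix.smul_mul, mul_assoc]
          _ = ((-1 : ℂ) ^ tf) • (Q f * (((-1 : ℂ) ^ tg) • (Qi g * B k))) := by
              rw [hginv]
          _ = (((-1 : ℂ) ^ tf) * ((-1 : ℂ) ^ tg)) • ((Q f * Qi g) * B k) := by
              rw [Matrix.mul_smul, smul_smul, mul_assoc]
          _ = -((Q f * Qi g) * B k) := by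
              rw [← pow_add, Odd.neg_one_pow hodd, neg_smul, one_smul]
      have h1 : trace ((B k * (Q f * Qi g)) * Bi k) = trace (Q f * Qi g) := by
        rw [trace_mul_comm, ← mul_assoc, hBi2, one_mul]
      have h2 : (B k * (Q f * Qi g)) * Bi k = -(Q f * Qi g) := by
        rw [hBX, neg_mul, mul_assoc, hBi1, mul_one]
      have h3 : trace (Q f * Qi g) = -trace (Q f * Qi g) := by
        conv_lhs => rw [← h1]
        rw [h2, trace_neg]
      have h4 : (2 : ℂ) * trace (Q f * Qi g) = 0 := by linear_combination h3
      exact (mul_eq_zero.mp h4).resolve_left two_ne_zero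
  have hLI : LinearIndependent ℂ Q := by
    rw [Fintype.linearIndependent_iff]
    intro c hc g
    have h0 := congrArg (fun A : Matrix X X ℂ => trace (A * Qi g)) hc
    simp only [Finset.sum_mul, Matrix.smul_mul, Matrix.zero_mul, trace_zero, trace_sum,
      trace_smul, htrace, smul_eq_mul, mul_ite, mul_zero, Finset.sum_ite_eq',
      Finset.mem_univ, if_pos] at h0
    have hN : (Fintype.card X : ℂ) ≠ 0 := by
      exact_mod_cast Fintype.card_pos.ne'
    exact (mul_eq_zero.mp h0).resolve_right hN
  have hcard := hLI.fintype_card_le_finrank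
  rw [Module.finrank_matrix] at hcard
  simpa [Fintype.card_fun] using hcard

end Key

lemma kronPow_unitary {n : ℕ} (U : Fin n → Matrix (Fin 2) (Fin 2) ℂ)
    (h : ∀ k, U k ∈ Matrix.unitaryGroup (Fin 2) ℂ) :
    (kronPow U)ᴴ * kronPow U = 1 := by
  ext x y
  have hz : ∀ z : Fin n → Fin 2, ((kronPow U)ᴴ) x z * (kronPow U) z y
      = ∏ k, ((U k)ᴴ) (x k) (z k) * (U k) (z k) (y k) := by
    intro z
    rw [Matrix.conjTranspose_apply]
    simp only [kronPow, Matrix.of_apply]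
    rw [star_prod, ← Finset.prod_mul_distrib]
    apply Finset.prod_congr rfl
    intro k _
    rw [Matrix.conjTranspose_apply]
  rw [Matrix.mul_apply]
  calc ∑ z : Fin n → Fin 2, ((kronPow U)ᴴ) x z * (kronPow U) z y
      = ∑ z : Fin n → Fin 2, ∏ k, ((U k)ᴴ) (x k) (z k) * (U k) (z k) (y k) :=
        Finset.sum_congr rfl fun z _ => hz z
    _ = ∏ k, ∑ a : Fin 2, ((U k)ᴴ) (x k) a * (U k) a (y k) := by
        rw [Finset.prod_univ_sum, Fintype.piFinset_univ]
    _ = ∏ k, ((U k)ᴴ * U k) (x k) (y k) :=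
        Finset.prod_congr rfl fun k _ => (Matrix.mul_apply).symm
    _ = ∏ k, (1 : Matrix (Fin 2) (Fin 2) ℂ) (x k) (y k) := by
        apply Finset.prod_congr rfl
        intro k _
        have h1 : (U k)ᴴ * U k = 1 := Matrix.mem_unitaryGroup_iff'.mp (h k)
        rw [h1]
    _ = (1 : Matrix (Fin n → Fin 2) (Fin n → Fin 2) ℂ) x y := by
        simp only [Matrix.one_apply]
        rw [Finset.prod_boole]
        by_cases hxy : x = y
        · rw [if_pos hxy, if_pos (fun k _ => congrFun hxy k)]
        · rw [if_neg hxy, if_neg]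
          intro hall
          exact hxy (funext fun k => hall k (Finset.mem_univ k))

section Antisym
variable {κ : Type*} [Fintype κ] [DecidableEq κ]

lemma dot_conj (A B : Matrix κ κ ℂ) (ψ : κ → ℂ) :
    star (A *ᵥ ψ) ⬝ᵥ (B *ᵥ ψ) = star ψ ⬝ᵥ ((Aᴴ * B) *ᵥ ψ) := by
  rw [Matrix.star_mulVec, Matrix.dotProduct_mulVec, Matrix.vecMul_vecMul,
    Matrix.dotProduct_mulVec]

lemma antisym_of_vanishing (M : Matrix κ κ ℂ)
    (h : ∀ ψ : κ → ℂ, (∀ x, (ψ x).im = 0) → star ψ ⬝ᵥ ψ = 1 → star ψ ⬝ᵥ (M *ᵥ ψ) = 0) :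
    Mᵀ = -M := by
  have hsingle : ∀ x : κ, star (Pi.single x (1:ℂ) : κ → ℂ) = Pi.single x (1:ℂ) := by
    intro x
    funext z
    simp [Pi.single_apply, apply_ite (star : ℂ → ℂ)]
  have hdiag : ∀ x, M x x = 0 := by
    intro x
    have h1 := h (Pi.single x 1) ?_ ?_
    · rw [hsingle, Matrix.mulVec_single] at h1
      simpa [single_dotProduct] using h1
    · intro z
      simp only [Pi.single_apply]
      split <;> simp
    · rw [hsingle]
      simp [single_dotProduct, Pi.single_apply]
  have hoff : ∀ x y, x ≠ y → M x y + M y x = 0 := by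
    intro x y hxy
    have hxy' : y ≠ x := Ne.symm hxy
    obtain ⟨c, hcim, hcc⟩ : ∃ c : ℂ, c.im = 0 ∧ c * c = 2⁻¹ := by
      refine ⟨(((Real.sqrt 2)⁻¹ : ℝ) : ℂ), Complex.ofReal_im _, ?_⟩
      rw [← Complex.ofReal_mul, ← mul_inv, Real.mul_self_sqrt (by norm_num)]
      norm_num
    have hcstar : star c = c := by
      rw [Complex.star_def, Complex.conj_eq_iff_im]
      exact hcim
    set ψ : κ → ℂ := c • ((Pi.single x 1 : κ → ℂ) + Pi.single y 1) with hψ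
    have hstar : star ψ = ψ := by
      rw [hψ, star_smul, star_add, hsingle, hsingle, hcstar]
    have him : ∀ z, (ψ z).im = 0 := by
      intro z
      rw [hψ]
      simp only [Pi.smul_apply, Pi.add_apply, Pi.single_apply, smul_eq_mul]
      split_ifs <;> simp [hcim, Complex.mul_im]
    have hnorm : star ψ ⬝ᵥ ψ = 1 := by
      rw [hstar, hψ]
      simp only [smul_dotProduct, dotProduct_smul,
        add_dotProduct, dotProduct_add, single_dotProduct,
        Pi.add_apply, Pi.single_apply, smul_eq_mul, one_mul]
      norm_num [hxy, hxy']
      linear_combination 2 * hcc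
    have h1 := h ψ him hnorm
    rw [hstar, hψ] at h1
    simp only [Matrix.mulVec_smul, Matrix.mulVec_add, Matrix.mulVec_single,
      smul_dotProduct, dotProduct_smul, add_dotProduct,
      dotProduct_add, single_dotProduct, smul_eq_mul,
      Pi.add_apply, mul_one, one_mul, MulOpposite.op_one, one_smul, Matrix.col_apply] at h1
    rw [hdiag x, hdiag y] at h1
    have h2 : (c * c) * (M x y + M y x) = 0 := by linear_combination h1
    have hc0 : c * c ≠ 0 := by rw [hcc]; norm_num
    exact (mul_eq_zero.mp h2).resolve_left hc0
  ext x y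
  by_cases hxy : x = y
  · subst hxy
    simp [Matrix.transpose_apply, hdiag x]
  · have := hoff y x (Ne.symm hxy)
    simp only [Matrix.transpose_apply, Matrix.neg_apply]
    linear_combination this

end Antisym

lemma arith_bound : ∀ m : ℕ, 4 ≤ m → m + m + 3 ≤ 2 ^ m := by
  intro m
  induction m with
  | zero => omega
  | succ k ih =>
    intro hk
    by_cases h4 : 4 ≤ k
    · have := ih h4
      rw [pow_succ]
      omega
    · have hk3 : k = 3 := by omega
      subst hk3
      norm_num

end StmtAux

/-- For every `n ≥ 4` there is no state-independent basis construction for real `n`-qubit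
states: no `2^n` strings of local `2×2` unitaries map every real unit vector of
`(ℂ²)^{⊗n}` to an orthonormal basis of `ℂ^{2^n}`. -/
theorem stmt14 (n : ℕ) (hn : 4 ≤ n) :
    ¬ ∃ U : Fin (2 ^ n) → Fin n → Matrix (Fin 2) (Fin 2) ℂ,
      (∀ j k, U j k ∈ Matrix.unitaryGroup (Fin 2) ℂ) ∧
      ∀ ψ : (Fin n → Fin 2) → ℂ, (∀ x, (ψ x).im = 0) → star ψ ⬝ᵥ ψ = 1 →
        IsONBasis (fun j => kronPow (U j) *ᵥ ψ) := by
  rintro ⟨U, hU, hONB⟩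
  classical
  have hpow : 4 ≤ 2 ^ n := by
    calc 4 = 2 ^ 2 := by norm_num
    _ ≤ 2 ^ n := Nat.pow_le_pow_right (by norm_num) (by omega)
  set V : Fin (2 ^ n) → Matrix (Fin n → Fin 2) (Fin n → Fin 2) ℂ :=
    fun j => kronPow (U j) with hV
  have hVu : ∀ j, (V j)ᴴ * V j = 1 := fun j => StmtAux.kronPow_unitary _ (hU j)
  have hVu' : ∀ j, V j * (V j)ᴴ = 1 := fun j => mul_eq_one_comm.mp (hVu j)
  -- antisymmetry of the cross Gram matrices
  have hM : ∀ j j', j ≠ j' → ((V j)ᴴ * V j')ᵀ = -((V j)ᴴ * V j') := by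
    intro j j' hjj
    apply StmtAux.antisym_of_vanishing
    intro ψ him hnorm
    have h2 := (hONB ψ him hnorm).1 j j'
    rw [if_neg hjj] at h2
    rw [← StmtAux.dot_conj]
    exact h2
  -- the distinguished index 0 and the embedded anticommuting family
  set j0 : Fin (2 ^ n) := ⟨0, by omega⟩ with hj0
  set d : ℕ := 2 ^ n - 2 with hd
  set emb : Fin (d + 1) → Fin (2 ^ n) := fun i => ⟨i.1 + 1, by
    have := i.2
    omega⟩ with hemb
  have hembne : ∀ i, emb i ≠ j0 := by
    intro i h
    have := congrArg Fin.val h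
    simp [hemb, hj0] at this
  have hembinj : ∀ i i', i ≠ i' → emb i ≠ emb i' := by
    intro i i' hii h
    have := congrArg Fin.val h
    simp only [hemb] at this
    exact hii (Fin.ext (by omega))
  set B : Fin (d + 1) → Matrix (Fin n → Fin 2) (Fin n → Fin 2) ℂ :=
    fun i => (V j0)ᴴ * V (emb i) with hB
  -- each B i is a unit
  have hBu : ∀ i, IsUnit (B i) := by
    intro i
    rw [isUnit_iff_exists]
    refine ⟨(V (emb i))ᴴ * V j0, ?_, ?_⟩
    · rw [hB]
      calc (V j0)ᴴ * V (emb i) * ((V (emb i))ᴴ * V j0)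
          = (V j0)ᴴ * (V (emb i) * (V (emb i))ᴴ) * V j0 := by
            rw [mul_assoc, mul_assoc, mul_assoc]
        _ = 1 := by rw [hVu', mul_one, hVu]
    · rw [hB]
      calc (V (emb i))ᴴ * V j0 * ((V j0)ᴴ * V (emb i))
          = (V (emb i))ᴴ * (V j0 * (V j0)ᴴ) * V (emb i) := by
            rw [mul_assoc, mul_assoc, mul_assoc]
        _ = 1 := by rw [hVu', mul_one, hVu]
  -- the B i pairwise anticommute
  have hBanti : ∀ i i', i ≠ i' → B i * B i' = -(B i' * B i) := by
    intro i i' hii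
    have hA : (B i)ᵀ = -(B i) := hM j0 (emb i) (Ne.symm (hembne i))
    have hA' : (B i')ᵀ = -(B i') := hM j0 (emb i') (Ne.symm (hembne i'))
    have hAu : (B i)ᴴ * B i = 1 := by
      rw [hB]
      rw [Matrix.conjTranspose_mul, Matrix.conjTranspose_conjTranspose]
      calc (V (emb i))ᴴ * V j0 * ((V j0)ᴴ * V (emb i))
          = (V (emb i))ᴴ * (V j0 * (V j0)ᴴ) * V (emb i) := by
            rw [mul_assoc, mul_assoc, mul_assoc]
        _ = 1 := by rw [hVu', mul_one, hVu]
    have hAu' : B i * (B i)ᴴ = 1 := mul_eq_one_comm.mp hAu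
    have hfact : (V (emb i))ᴴ * V (emb i') = (B i)ᴴ * B i' := by
      rw [hB]
      rw [Matrix.conjTranspose_mul, Matrix.conjTranspose_conjTranspose]
      calc (V (emb i))ᴴ * V (emb i') 
          = (V (emb i))ᴴ * 1 * V (emb i') := by rw [mul_one]
        _ = (V (emb i))ᴴ * (V j0 * (V j0)ᴴ) * V (emb i') := by rw [hVu']
        _ = (V (emb i))ᴴ * V j0 * ((V j0)ᴴ * V (emb i')) := by
            rw [mul_assoc, mul_assoc, mul_assoc]
    have hC : ((B i)ᴴ * B i')ᵀ = -((B i)ᴴ * B i') := by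
      rw [← hfact]
      exact hM (emb i) (emb i') (hembinj i i' hii)
    -- transpose of conjugate transpose
    have hAct : ((B i)ᴴ)ᵀ = -((B i)ᴴ) := by
      ext a b
      have h1 := congrFun (congrFun hA b) a
      simp only [Matrix.transpose_apply, Matrix.neg_apply] at h1 ⊢
      rw [Matrix.conjTranspose_apply, Matrix.conjTranspose_apply, h1]
      simp
    have hkey : B i' * (B i)ᴴ = -((B i)ᴴ * B i') := by
      have := hC
      rw [Matrix.transpose_mul, hA', hAct] at this
      calc B i' * (B i)ᴴ = -(B i') * -((B i)ᴴ) := by rw [neg_mul_neg]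
        _ = -((B i)ᴴ * B i') := this
    calc B i * B i' = B i * B i' * ((B i)ᴴ * B i) := by rw [hAu, mul_one]
      _ = B i * (B i' * (B i)ᴴ) * B i := by
          simp only [mul_assoc]
      _ = B i * -((B i)ᴴ * B i') * B i := by rw [hkey]
      _ = -(B i * (B i)ᴴ * (B i' * B i)) := by
          simp only [mul_neg, neg_mul, mul_assoc]
      _ = -(B i' * B i) := by rw [hAu', one_mul]
  -- apply the counting bound
  have hbound := StmtAux.anticomm_bound B hBu hBanti
  have hcardX : Fintype.card (Fin n → Fin 2) = 2 ^ n := by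
    simp [Fintype.card_fun]
  rw [hcardX, ← pow_add] at hbound
  have hle : d ≤ n + n := by
    exact (Nat.pow_le_pow_iff_right (by norm_num : 1 < 2)).mp hbound
  have harith := StmtAux.arith_bound n hn
  omega
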